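/- arXiv:2303.13136 — 4 statements merged into one kernel-verified Lean document; each statement's English description precedes it below -/
import Mathlib

section
/- For a continued fraction of the form p_1 z/(1 + q_1 z) − p_2 z²/(1 + q_2 z) − p_3 z²/(1 + q_3 z) − ⋯ (an A-fraction in one variable) whose n-th approximant is F^{(n)}(z), if the coefficients are obtained from a formal power series P(z) = Σ_{r≥1} c_r z^r by Gragg's algorithm under the assumption that all Hankel determinants H(n) = det(c_{i+j−1})_{1≤i,j≤n} are nonzero, then the Taylor expansion of F^{(n)} at 0 agrees with P through degree 2n; i.e. F^{(n)}(z) = Σ_{r=1}^{2n} c_r z^r + O(z^{2n+1}). -/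
/-- State of Gragg's algorithm at level `n`: `(B_{n−1}, B_n, σ_{n−1}, τ_{n−1})`
(the `B` polynomial-coefficient functions are extended by `0` to negative
arguments, and `B_n(0) = 1`). -/
structure GState where
  Bp : ℤ → ℂ
  Bc : ℤ → ℂ
  sp : ℂ
  tp : ℂ

/-- One step of Gragg's algorithm: from the data at level `n` compute
`σ_n = Σ_{r=0}^n c_{2n+1−r} B_n(r)`, `τ_n σ_n = Σ_{r=0}^n c_{2n+2−r} B_n(r)`,
`p_{n+1} = σ_n/σ_{n−1}`, `q_{n+1} = τ_{n−1} − τ_n`, and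
`B_{n+1}(r) = B_n(r) + q_{n+1} B_n(r−1) − p_{n+1} B_{n−1}(r−2)`. -/
noncomputable def gstep (c : ℕ → ℂ) (n : ℕ) (s : GState) : GState :=
  let sc : ℂ := ∑ r ∈ Finset.range (n + 1), c (2 * n + 1 - r) * s.Bc r
  let tc : ℂ := (∑ r ∈ Finset.range (n + 1), c (2 * n + 2 - r) * s.Bc r) / sc
  let p : ℂ := sc / s.sp
  let q : ℂ := s.tp - tc
  ⟨s.Bc,
    fun r => if r = 0 then 1 else if r < 0 then 0
      else s.Bc r + q * s.Bc (r - 1) - p * s.Bp (r - 2),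
    sc, tc⟩

/-- Gragg's algorithm iterated from the initial conditions
`σ_{−1} = B_0(0) = 1`, `τ_{−1} = 0`. -/
noncomputable def gst (c : ℕ → ℂ) : ℕ → GState
  | 0 => ⟨0, fun r => if r = 0 then 1 else 0, 1, 0⟩
  | n + 1 => gstep c n (gst c n)

/-- The coefficient `p_n` produced by Gragg's algorithm: `p_{n+1} = σ_n/σ_{n−1}`. -/
noncomputable def graggP (c : ℕ → ℂ) (n : ℕ) : ℂ := (gst c n).sp / (gst c (n - 1)).sp

/-- The coefficient `q_n` produced by Gragg's algorithm: `q_{n+1} = τ_{n−1} − τ_n`. -/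
noncomputable def graggQ (c : ℕ → ℂ) (n : ℕ) : ℂ := (gst c (n - 1)).tp - (gst c n).tp

/-- The `n × n` Hankel determinant `H(n) = det (c_{i+j−1})_{1≤i,j≤n}`. -/
def hankel (c : ℕ → ℂ) (n : ℕ) : ℂ :=
  Matrix.det (Matrix.of fun i j : Fin n => c (i.1 + j.1 + 1))


/-- Tails of the A-fraction
`p_1 z/(1+q_1 z) − p_2 z²/(1+q_2 z) − p_3 z²/(1+q_3 z) − ⋯` built from the
coefficients produced by Gragg's algorithm, as formal power series. -/
noncomputable def graggTail (c : ℕ → ℂ) : ℕ → ℕ → PowerSeries ℂ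
  | 0, _ => 0
  | fuel + 1, k =>
    PowerSeries.C (graggP c k) * PowerSeries.X ^ 2 *
      (1 + PowerSeries.C (graggQ c k) * PowerSeries.X -
        graggTail c fuel (k + 1))⁻¹

/-- The `n`-th approximant `F^{(n)}` of the A-fraction built from Gragg's
algorithm, as a formal power series. -/
noncomputable def graggApprox (c : ℕ → ℂ) (n : ℕ) : PowerSeries ℂ :=
  PowerSeries.C (graggP c 1) * PowerSeries.X *
    (1 + PowerSeries.C (graggQ c 1) * PowerSeries.X -
      graggTail c (n - 1) 2)⁻¹


namespace GraggAux
open PowerSeries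

variable (c : ℕ → ℂ)

lemma gst_succ (n : ℕ) : gst c (n + 1) = gstep c n (gst c n) := rfl

lemma gstep_Bp (n : ℕ) (s : GState) : (gstep c n s).Bp = s.Bc := rfl

lemma gstep_sp (n : ℕ) (s : GState) :
    (gstep c n s).sp = ∑ r ∈ Finset.range (n + 1), c (2 * n + 1 - r) * s.Bc r := rfl

lemma gstep_tp (n : ℕ) (s : GState) :
    (gstep c n s).tp
      = (∑ r ∈ Finset.range (n + 1), c (2 * n + 2 - r) * s.Bc r) / (gstep c n s).sp := rfl

lemma gst_Bc_succ (n : ℕ) (r : ℤ) :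
    (gst c (n + 1)).Bc r = if r = 0 then 1 else if r < 0 then 0
      else (gst c n).Bc r + graggQ c (n + 1) * (gst c n).Bc (r - 1)
        - graggP c (n + 1) * (gst c n).Bp (r - 2) := rfl

end GraggAux
namespace GraggAux
open PowerSeries

variable (c : ℕ → ℂ)

lemma gst_Bc_neg (n : ℕ) (r : ℤ) (hr : r < 0) : (gst c n).Bc r = 0 := by
  cases n with
  | zero => simp only [gst]; rw [if_neg (by omega)]
  | succ n => rw [gst_Bc_succ, if_neg (by omega), if_pos hr]

lemma gst_Bc_zero (n : ℕ) : (gst c n).Bc 0 = 1 := by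
  cases n with
  | zero => simp [gst]
  | succ n => rw [gst_Bc_succ, if_pos rfl]

lemma gst_Bp_eq (n : ℕ) : (gst c (n + 1)).Bp = (gst c n).Bc := rfl

lemma gst_Bc_big : ∀ n : ℕ, ∀ r : ℤ, (n : ℤ) < r → (gst c n).Bc r = 0
  | 0, r, hr => by simp only [gst]; rw [if_neg (by omega)]
  | n + 1, r, hr => by
    rw [gst_Bc_succ, if_neg (by omega), if_neg (by omega),
      gst_Bc_big n r (by omega), gst_Bc_big n (r - 1) (by omega)]
    cases n with
    | zero => show (0:ℂ) + _ * 0 - _ * (0 : ℤ → ℂ) (r-2) = 0; simp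
    | succ m =>
        rw [gst_Bp_eq, gst_Bc_big m (r - 2) (by push_cast; omega)]; ring

lemma gst_Bp_big (n : ℕ) (r : ℤ) (hr : (n : ℤ) - 1 < r) : (gst c n).Bp r = 0 := by
  cases n with
  | zero => rfl
  | succ n => rw [gst_Bp_eq, gst_Bc_big c n r (by omega)]

lemma gst_Bp_neg (n : ℕ) (r : ℤ) (hr : r < 0) : (gst c n).Bp r = 0 := by
  cases n with
  | zero => rfl
  | succ n => rw [gst_Bp_eq, gst_Bc_neg c n r hr]

/-- The denominator polynomial `Q_n` as a power series. -/
noncomputable def Qs (n : ℕ) : PowerSeries ℂ := PowerSeries.mk fun r : ℕ => (gst c n).Bc (r : ℤ)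

/-- The shifted denominator polynomial `Q_{n-1}` (with `Q_{-1} = 0`). -/
noncomputable def Qm (n : ℕ) : PowerSeries ℂ := PowerSeries.mk fun r : ℕ => (gst c n).Bp (r : ℤ)

lemma Qm_succ (n : ℕ) : Qm c (n + 1) = Qs c n := rfl

lemma Qm_zero : Qm c 0 = 0 := by
  ext r; simp only [Qm, coeff_mk, map_zero]; rfl

lemma Qs_zero : Qs c 0 = 1 := by
  ext r; simp only [Qs, gst, coeff_mk]
  cases r with
  | zero => simp
  | succ m => rw [if_neg (by exact_mod_cast Nat.succ_ne_zero m)]; simp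

lemma coeff_Qs (n r : ℕ) : coeff r (Qs c n) = (gst c n).Bc (r : ℤ) := coeff_mk _ _

lemma coeff_Qm (n r : ℕ) : coeff r (Qm c n) = (gst c n).Bp (r : ℤ) := coeff_mk _ _

lemma constantCoeff_Qs (n : ℕ) : constantCoeff (Qs c n) = 1 := by
  rw [← coeff_zero_eq_constantCoeff_apply, coeff_Qs]
  exact_mod_cast gst_Bc_zero c n

end GraggAux
namespace GraggAux
open PowerSeries

variable (c : ℕ → ℂ)

/-- The generating power series `P(z) = Σ_{r ≥ 1} c_r z^r`. -/
noncomputable def Pgen : PowerSeries ℂ := PowerSeries.mk fun r => if r = 0 then 0 else c r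

lemma coeff_Pgen (r : ℕ) : coeff r (Pgen c) = if r = 0 then 0 else c r := coeff_mk _ _

/-- `σ_n`. -/
noncomputable def sig (n : ℕ) : ℂ := (gst c (n + 1)).sp

/-- `τ_n`. -/
noncomputable def tau (n : ℕ) : ℂ := (gst c (n + 1)).tp

lemma sig_eq (n : ℕ) :
    sig c n = ∑ r ∈ Finset.range (n + 1), c (2 * n + 1 - r) * (gst c n).Bc r := rfl

lemma tau_eq (n : ℕ) :
    tau c n = (∑ r ∈ Finset.range (n + 1), c (2 * n + 2 - r) * (gst c n).Bc r) / sig c n := rfl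

lemma sp_zero : (gst c 0).sp = 1 := rfl

lemma tp_zero : (gst c 0).tp = 0 := rfl

lemma graggP_one : graggP c 1 = sig c 0 := by
  show (gst c 1).sp / (gst c 0).sp = _
  rw [sp_zero, div_one]; rfl

lemma graggP_succ_succ (n : ℕ) : graggP c (n + 2) = sig c (n + 1) / sig c n := rfl

lemma graggQ_one : graggQ c 1 = -tau c 0 := by
  show (gst c 0).tp - (gst c 1).tp = _
  rw [tp_zero]; ring_nf; rfl

lemma graggQ_succ_succ (n : ℕ) : graggQ c (n + 2) = tau c n - tau c (n + 1) := rfl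

lemma tau_mul_sig (n : ℕ) (h : sig c n ≠ 0) :
    tau c n * sig c n = ∑ r ∈ Finset.range (n + 1), c (2 * n + 2 - r) * (gst c n).Bc r := by
  rw [tau_eq, div_mul_cancel₀ _ h]

lemma coeff_P_mul_Qs (n j : ℕ) (hj : n < j) :
    coeff j (Pgen c * Qs c n)
      = ∑ r ∈ Finset.range (n + 1), c (j - r) * (gst c n).Bc (r : ℤ) := by
  rw [mul_comm, coeff_mul, Finset.Nat.sum_antidiagonal_eq_sum_range_succ_mk]
  rw [← Finset.sum_subset (Finset.range_subset_range.2 (show n + 1 ≤ j + 1 by omega)) ?_]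
  · refine Finset.sum_congr rfl fun k hk => ?_
    rw [Finset.mem_range] at hk
    rw [coeff_Qs, coeff_Pgen, if_neg (by omega), mul_comm]
  · intro k hk1 hk2
    rw [Finset.mem_range] at hk1 hk2
    rw [coeff_Qs, gst_Bc_big c n k (by exact_mod_cast by omega), zero_mul]

lemma coeff_sig (n : ℕ) : coeff (2 * n + 1) (Pgen c * Qs c n) = sig c n := by
  rw [coeff_P_mul_Qs c n _ (by omega), sig_eq]

lemma coeff_tau (n : ℕ) (h : sig c n ≠ 0) :
    coeff (2 * n + 2) (Pgen c * Qs c n) = tau c n * sig c n := by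
  rw [coeff_P_mul_Qs c n _ (by omega), tau_mul_sig c n h]

lemma coeff_comb (a b : ℂ) (f g : PowerSeries ℂ) (j : ℕ) :
    coeff j ((1 + C a * X) * f - C b * X ^ 2 * g)
      = coeff j f + a * (if 1 ≤ j then coeff (j - 1) f else 0)
        - b * (if 2 ≤ j then coeff (j - 2) g else 0) := by
  have h1 : (1 + C a * X) * f - C b * X ^ 2 * g
      = f + C a * (X ^ 1 * f) - C b * (X ^ 2 * g) := by ring
  rw [h1, map_sub, map_add, coeff_C_mul, coeff_C_mul, coeff_X_pow_mul', coeff_X_pow_mul']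

lemma Qs_rec (n : ℕ) :
    Qs c (n + 1) = (1 + C (graggQ c (n + 1)) * X) * Qs c n
      - C (graggP c (n + 1)) * X ^ 2 * Qm c n := by
  ext j
  rw [coeff_comb, coeff_Qs, coeff_Qs, gst_Bc_succ]
  match j with
  | 0 => simp [gst_Bc_zero]
  | 1 =>
    rw [if_neg (by norm_num), if_neg (by norm_num), if_pos (by norm_num),
      if_neg (by norm_num)]
    norm_num [gst_Bp_neg c n (-1) (by norm_num), gst_Bc_zero]
    rw [constantCoeff_Qs, mul_one]
  | (j + 2) =>
    rw [if_neg (by push_cast; omega), if_neg (by push_cast; omega)]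
    rw [if_pos (by omega), if_pos (by omega), coeff_Qs, coeff_Qm]
    have e1 : ((j + 2 : ℕ) : ℤ) - 1 = ((j + 2 - 1 : ℕ) : ℤ) := by push_cast; ring
    have e2 : ((j + 2 : ℕ) : ℤ) - 2 = ((j + 2 - 2 : ℕ) : ℤ) := by push_cast; ring
    rw [e1, e2]

end GraggAux
namespace GraggAux
open PowerSeries

variable (c : ℕ → ℂ)

lemma helper_sum (n m : ℕ) (hm : n ≤ m) :
    ∑ r ∈ Finset.range (n + 1), c (m + 1 - r) * (gst c n).Bc r
      = c (m + 1) + ∑ j ∈ Finset.range n, c (m - (n - 1 - j)) * (gst c n).Bc ((n : ℤ) - j) := by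
  rw [Finset.sum_range_succ', ← Finset.sum_range_reflect
    (fun j => c (m - (n - 1 - j)) * (gst c n).Bc ((n : ℤ) - j)) n]
  rw [Nat.sub_zero, Nat.cast_zero, gst_Bc_zero, mul_one, add_comm]
  congr 1
  refine Finset.sum_congr rfl fun j hj => ?_
  rw [Finset.mem_range] at hj
  congr 1
  · congr 1; omega
  · congr 1; push_cast; omega

lemma hankel_zero : hankel c 0 = 1 := Matrix.det_fin_zero

/-- The Hankel matrix of size `n`. -/
def Amat (n : ℕ) : Matrix (Fin n) (Fin n) ℂ := Matrix.of fun i j : Fin n => c (i.1 + j.1 + 1)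

/-- The solution vector of denominator coefficients. -/
noncomputable def xv (n : ℕ) : Fin n → ℂ := fun j => (gst c n).Bc ((n : ℤ) - j.1)

/-- The border vector. -/
def bv (n : ℕ) : Fin n → ℂ := fun i => c (i.1 + n + 1)

lemma hankel_eq_det (n : ℕ) : hankel c n = (Amat c n).det := rfl

lemma sig_hankel (n : ℕ) (hn : hankel c n ≠ 0)
    (hvan : ∀ j, n + 1 ≤ j → j ≤ 2 * n → coeff j (Pgen c * Qs c n) = 0) :
    hankel c (n + 1) = hankel c n * sig c n := by
  classical
  have hdet : IsUnit (Amat c n).det := isUnit_iff_ne_zero.2 (hankel_eq_det c n ▸ hn)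
  haveI : Invertible (Amat c n) := (Amat c n).invertibleOfIsUnitDet hdet
  -- the linear system satisfied by the denominator coefficients
  have hsys : (Amat c n).mulVec (xv c n) = -(bv c n) := by
    funext i
    have h0 := hvan (n + i.1 + 1) (by omega) (by omega)
    rw [coeff_P_mul_Qs c n _ (by omega),
      show n + i.1 + 1 = (n + i.1) + 1 by ring, helper_sum c n (n + i.1) (by omega)] at h0
    have hmv : (Amat c n).mulVec (xv c n) i
        = ∑ j : Fin n, c (i.1 + j.1 + 1) * (gst c n).Bc ((n : ℤ) - j.1) := rfl
    rw [hmv, show (∑ j : Fin n, c (i.1 + j.1 + 1) * (gst c n).Bc ((n : ℤ) - j.1))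
        = ∑ k ∈ Finset.range n, c (i.1 + k + 1) * (gst c n).Bc ((n : ℤ) - k) from
      Fin.sum_univ_eq_sum_range (fun k => c (i.1 + k + 1) * (gst c n).Bc ((n : ℤ) - k)) n]
    have hre : ∑ k ∈ Finset.range n, c (i.1 + k + 1) * (gst c n).Bc ((n : ℤ) - k)
        = ∑ j ∈ Finset.range n, c (n + i.1 - (n - 1 - j)) * (gst c n).Bc ((n : ℤ) - j) := by
      refine Finset.sum_congr rfl fun j hj => ?_
      rw [Finset.mem_range] at hj
      congr 2
      omega
    rw [hre, Pi.neg_apply]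
    show _ = -c (i.1 + n + 1)
    rw [show i.1 + n + 1 = n + i.1 + 1 by ring]
    linear_combination h0
  have hinv : (Amat c n)⁻¹.mulVec (bv c n) = -(xv c n) := by
    have h1 := congrArg (fun v => (Amat c n)⁻¹.mulVec v) hsys
    simp only [Matrix.mulVec_mulVec, Matrix.nonsing_inv_mul _ hdet, Matrix.one_mulVec,
      Matrix.mulVec_neg] at h1
    rw [h1, neg_neg]
  -- sigma as Schur complement
  have hsig : sig c n = c (2 * n + 1) + ∑ j : Fin n, bv c n j * xv c n j := by
    rw [sig_eq, show 2 * n + 1 = (2 * n) + 1 by rfl, helper_sum c n (2 * n) (by omega)]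
    congr 1
    rw [show (∑ j : Fin n, bv c n j * xv c n j)
        = ∑ k ∈ Finset.range n, c (k + n + 1) * (gst c n).Bc ((n : ℤ) - k) from
      Fin.sum_univ_eq_sum_range (fun k => c (k + n + 1) * (gst c n).Bc ((n : ℤ) - k)) n]
    refine Finset.sum_congr rfl fun j hj => ?_
    rw [Finset.mem_range] at hj
    congr 2
    omega
  -- block decomposition of the (n+1)-Hankel matrix
  have hblock : hankel c (n + 1)
      = (Matrix.fromBlocks (Amat c n) (Matrix.of fun i (_ : Fin 1) => bv c n i)
          (Matrix.of fun (_ : Fin 1) j => bv c n j)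
          (Matrix.of fun _ _ : Fin 1 => c (2 * n + 1))).det := by
    rw [hankel, ← Matrix.det_submatrix_equiv_self finSumFinEquiv.symm]
    congr 1
    ext i j
    obtain ⟨s, rfl⟩ : ∃ s, i = finSumFinEquiv s :=
      ⟨finSumFinEquiv.symm i, (Equiv.apply_symm_apply _ _).symm⟩
    obtain ⟨t, rfl⟩ : ∃ t, j = finSumFinEquiv t :=
      ⟨finSumFinEquiv.symm j, (Equiv.apply_symm_apply _ _).symm⟩
    rw [Matrix.submatrix_apply, Equiv.symm_apply_apply, Equiv.symm_apply_apply]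
    rcases s with a | a <;> rcases t with b | b <;>
        simp only [Matrix.of_apply, finSumFinEquiv_apply_left, finSumFinEquiv_apply_right,
          Matrix.fromBlocks_apply₁₁, Matrix.fromBlocks_apply₁₂, Matrix.fromBlocks_apply₂₁,
          Matrix.fromBlocks_apply₂₂, Fin.coe_castAdd, Fin.coe_natAdd, Amat, bv] <;>
      first
        | rfl
        | (congr 1; omega)
  rw [hblock, Matrix.det_fromBlocks₁₁, Matrix.invOf_eq_nonsing_inv, Matrix.det_fin_one,
    ← hankel_eq_det]
  congr 1
  have hcol : ∀ jj : Fin n,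
      ((Amat c n)⁻¹ * Matrix.of fun i (_ : Fin 1) => bv c n i) jj 0 = -(xv c n jj) := by
    intro jj
    have h2 := congrFun hinv jj
    rw [Matrix.mul_apply]
    exact h2
  rw [Matrix.mul_assoc, Matrix.sub_apply, Matrix.mul_apply]
  rw [Finset.sum_congr rfl fun jj (_ : jj ∈ Finset.univ) => by rw [hcol jj]]
  rw [hsig]
  simp only [Matrix.of_apply]
  rw [Finset.sum_congr rfl fun jj (_ : jj ∈ Finset.univ) =>
    (by ring : bv c n jj * -(xv c n jj) = -(bv c n jj * xv c n jj))]
  rw [Finset.sum_neg_distrib]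
  ring

lemma sig_ne (n : ℕ) (hH : ∀ m : ℕ, 0 < m → hankel c m ≠ 0)
    (hvan : ∀ j, n + 1 ≤ j → j ≤ 2 * n → coeff j (Pgen c * Qs c n) = 0) :
    sig c n ≠ 0 := by
  have hn : hankel c n ≠ 0 := by
    cases n with
    | zero => rw [hankel_zero]; exact one_ne_zero
    | succ m => exact hH _ (Nat.succ_pos m)
  intro h0
  exact hH (n + 1) (Nat.succ_pos n) (by rw [sig_hankel c n hn hvan, h0, mul_zero])

end GraggAux
namespace GraggAux
open PowerSeries

variable (c : ℕ → ℂ)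

/-- Continuant denominators of the tails of the A-fraction. -/
noncomputable def Dd : ℕ → ℕ → PowerSeries ℂ
  | 0, _ => 1
  | 1, k => 1 + C (graggQ c k) * X
  | (m + 2), k => (1 + C (graggQ c k) * X) * Dd (m + 1) (k + 1)
      - C (graggP c (k + 1)) * X ^ 2 * Dd m (k + 2)

lemma constCoeff_Dd : ∀ m k, constantCoeff (Dd c m k) = 1
  | 0, _ => map_one _
  | 1, k => by simp [Dd]
  | (m + 2), k => by
    simp [Dd, constCoeff_Dd (m + 1) (k + 1), constCoeff_Dd m (k + 2)]

lemma coeff_Dd_big : ∀ m k j, m < j → coeff j (Dd c m k) = 0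
  | 0, k, j, hj => by
    rw [show Dd c 0 k = 1 from rfl, coeff_one, if_neg (by omega)]
  | 1, k, j, hj => by
    rw [show Dd c 1 k = 1 + C (graggQ c k) * X from rfl, map_add, coeff_one,
      if_neg (by omega), coeff_C_mul, coeff_X, if_neg (by omega), mul_zero, add_zero]
  | (m + 2), k, j, hj => by
    rw [show Dd c (m + 2) k = (1 + C (graggQ c k) * X) * Dd c (m + 1) (k + 1)
        - C (graggP c (k + 1)) * X ^ 2 * Dd c m (k + 2) from rfl, coeff_comb,
      coeff_Dd_big (m + 1) (k + 1) j (by omega), if_pos (by omega), if_pos (by omega),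
      coeff_Dd_big (m + 1) (k + 1) (j - 1) (by omega), coeff_Dd_big m (k + 2) (j - 2) (by omega)]
    ring

lemma inv_swap (f g : PowerSeries ℂ) (hf : constantCoeff f ≠ 0)
    (hg : constantCoeff g ≠ 0) : (f * g⁻¹)⁻¹ = g * f⁻¹ := by
  symm
  rw [PowerSeries.eq_inv_iff_mul_eq_one (by
    rw [map_mul, PowerSeries.constantCoeff_inv]; exact mul_ne_zero hf (inv_ne_zero hg))]
  have h1 : g * f⁻¹ * (f * g⁻¹) = (f⁻¹ * f) * (g * g⁻¹) := by ring
  rw [h1, PowerSeries.inv_mul_cancel _ hf, PowerSeries.mul_inv_cancel _ hg, mul_one]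

lemma tail_eq : ∀ m k, 1 + C (graggQ c k) * X - graggTail c m (k + 1)
    = Dd c (m + 1) k * (Dd c m (k + 1))⁻¹
  | 0, k => by
    rw [show graggTail c 0 (k + 1) = 0 from rfl, sub_zero,
      show Dd c 0 (k + 1) = 1 from rfl, inv_one, mul_one]
    rfl
  | (m + 1), k => by
    have h1 : constantCoeff (Dd c (m + 1) (k + 1)) ≠ 0 := by
      rw [constCoeff_Dd]; exact one_ne_zero
    have h2 : constantCoeff (Dd c m (k + 2)) ≠ 0 := by
      rw [constCoeff_Dd]; exact one_ne_zero
    rw [show graggTail c (m + 1) (k + 1) = C (graggP c (k + 1)) * X ^ 2 *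
        (1 + C (graggQ c (k + 1)) * X - graggTail c m (k + 1 + 1))⁻¹ from rfl,
      tail_eq m (k + 1), inv_swap _ _ h1 h2,
      show Dd c (m + 2) k = (1 + C (graggQ c k) * X) * Dd c (m + 1) (k + 1)
        - C (graggP c (k + 1)) * X ^ 2 * Dd c m (k + 2) from rfl]
    have hu : Dd c (m + 1) (k + 1) * (Dd c (m + 1) (k + 1))⁻¹ = 1 :=
      PowerSeries.mul_inv_cancel _ h1
    linear_combination (-(1 + C (graggQ c k) * X)) * hu

lemma Dd_symm : ∀ m k, Dd c (m + 2) k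
    = (1 + C (graggQ c (k + m + 1)) * X) * Dd c (m + 1) k
      - C (graggP c (k + m + 1)) * X ^ 2 * Dd c m k
  | 0, k => by
    simp only [show Dd c 2 k = (1 + C (graggQ c k) * X) * Dd c 1 (k + 1)
        - C (graggP c (k + 1)) * X ^ 2 * Dd c 0 (k + 2) from rfl,
      show Dd c 1 (k + 1) = 1 + C (graggQ c (k + 1)) * X from rfl,
      show Dd c 1 k = 1 + C (graggQ c k) * X from rfl,
      show Dd c 0 k = 1 from rfl, show Dd c 0 (k + 2) = 1 from rfl,
      show k + 0 + 1 = k + 1 by omega]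
    ring
  | 1, k => by
    simp only [show Dd c 3 k = (1 + C (graggQ c k) * X) * Dd c 2 (k + 1)
        - C (graggP c (k + 1)) * X ^ 2 * Dd c 1 (k + 2) from rfl,
      show Dd c 2 (k + 1) = (1 + C (graggQ c (k + 1)) * X) * Dd c 1 (k + 2)
        - C (graggP c (k + 2)) * X ^ 2 * Dd c 0 (k + 3) from rfl,
      show Dd c 2 k = (1 + C (graggQ c k) * X) * Dd c 1 (k + 1)
        - C (graggP c (k + 1)) * X ^ 2 * Dd c 0 (k + 2) from rfl,
      show Dd c 1 (k + 2) = 1 + C (graggQ c (k + 2)) * X from rfl,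
      show Dd c 1 (k + 1) = 1 + C (graggQ c (k + 1)) * X from rfl,
      show Dd c 1 k = 1 + C (graggQ c k) * X from rfl,
      show Dd c 0 (k + 3) = 1 from rfl, show Dd c 0 (k + 2) = 1 from rfl,
      show k + 1 + 1 = k + 2 by omega]
    ring
  | (m + 2), k => by
    rw [show Dd c (m + 2 + 2) k = (1 + C (graggQ c k) * X) * Dd c (m + 2 + 1) (k + 1)
        - C (graggP c (k + 1)) * X ^ 2 * Dd c (m + 2) (k + 2) from rfl,
      Dd_symm (m + 1) (k + 1), Dd_symm m (k + 2),
      show Dd c (m + 2 + 1) k = (1 + C (graggQ c k) * X) * Dd c (m + 2) (k + 1)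
        - C (graggP c (k + 1)) * X ^ 2 * Dd c (m + 1) (k + 2) from rfl,
      show Dd c (m + 2) k = (1 + C (graggQ c k) * X) * Dd c (m + 1) (k + 1)
        - C (graggP c (k + 1)) * X ^ 2 * Dd c m (k + 2) from rfl]
    simp only [show k + 1 + (m + 1) + 1 = k + (m + 2) + 1 by omega,
      show k + 2 + m + 1 = k + (m + 2) + 1 by omega]
    rw [show Dd c (m + 2) (k + 1) = (1 + C (graggQ c (k + 1)) * X) * Dd c (m + 1) (k + 2)
        - C (graggP c (k + 2)) * X ^ 2 * Dd c m (k + 3) from rfl]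
    ring

lemma Dd_one_eq_Qs : ∀ m, Dd c m 1 = Qs c m
  | 0 => by rw [Qs_zero]; rfl
  | 1 => by
    have h := Qs_rec c 0
    rw [Qs_zero, Qm_zero] at h
    rw [h, show Dd c 1 1 = 1 + C (graggQ c 1) * X from rfl]
    simp only [Nat.zero_add]
    ring
  | (m + 2) => by
    rw [Dd_symm c m 1, Dd_one_eq_Qs (m + 1), Dd_one_eq_Qs m, Qs_rec c (m + 1), Qm_succ]
    simp only [show 1 + m + 1 = m + 1 + 1 by omega]

/-- Numerator polynomials of the A-fraction approximants. -/
noncomputable def As : ℕ → PowerSeries ℂ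
  | 0 => 0
  | (n + 1) => C (graggP c 1) * X * Dd c n 2

lemma coeff_As_big : ∀ n j, n < j → coeff j (As c n) = 0
  | 0, j, _ => by rw [show As c 0 = 0 from rfl, map_zero]
  | (n + 1), j, hj => by
    rw [show As c (n + 1) = C (graggP c 1) * X * Dd c n 2 from rfl,
      show C (graggP c 1) * X * Dd c n 2 = C (graggP c 1) * (X ^ 1 * Dd c n 2) by ring,
      coeff_C_mul, coeff_X_pow_mul', if_pos (by omega), coeff_Dd_big c n 2 (j - 1) (by omega),
      mul_zero]

lemma As_rec : ∀ m, As c (m + 2) = (1 + C (graggQ c (m + 2)) * X) * As c (m + 1)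
    - C (graggP c (m + 2)) * X ^ 2 * As c m
  | 0 => by
    rw [show As c 2 = C (graggP c 1) * X * Dd c 1 2 from rfl,
      show As c 1 = C (graggP c 1) * X * Dd c 0 2 from rfl,
      show As c 0 = 0 from rfl,
      show Dd c 1 2 = 1 + C (graggQ c 2) * X from rfl,
      show Dd c 0 2 = 1 from rfl]
    ring
  | (m + 1) => by
    rw [show As c (m + 3) = C (graggP c 1) * X * Dd c (m + 2) 2 from rfl,
      Dd_symm c m 2,
      show As c (m + 2) = C (graggP c 1) * X * Dd c (m + 1) 2 from rfl,
      show As c (m + 1) = C (graggP c 1) * X * Dd c m 2 from rfl,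
      show 2 + m + 1 = m + 1 + 2 by omega]
    ring

lemma approx_eq (n : ℕ) (hn : 1 ≤ n) : graggApprox c n = As c n * (Qs c n)⁻¹ := by
  obtain ⟨m, rfl⟩ : ∃ m, n = m + 1 := ⟨n - 1, by omega⟩
  have h1 : constantCoeff (Dd c (m + 1) 1) ≠ 0 := by
    rw [constCoeff_Dd]; exact one_ne_zero
  have h2 : constantCoeff (Dd c m 2) ≠ 0 := by
    rw [constCoeff_Dd]; exact one_ne_zero
  rw [graggApprox, show m + 1 - 1 = m from rfl, tail_eq c m 1, inv_swap _ _ h1 h2,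
    Dd_one_eq_Qs, show As c (m + 1) = C (graggP c 1) * X * Dd c m 2 from rfl]
  ring

end GraggAux
namespace GraggAux
open PowerSeries

variable (c : ℕ → ℂ)

lemma coeff_comb1 (a b : ℂ) (f : PowerSeries ℂ) (j : ℕ) :
    coeff j ((1 + C a * X) * f - C b * X)
      = coeff j f + a * (if 1 ≤ j then coeff (j - 1) f else 0)
        - b * (if j = 1 then 1 else 0) := by
  have h1 : (1 + C a * X) * f - C b * X = f + C a * (X ^ 1 * f) - C b * X := by ring
  rw [h1, map_sub, map_add, coeff_C_mul, coeff_C_mul, coeff_X_pow_mul', coeff_X]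

lemma sig_ne_of_vanish (hH : ∀ m : ℕ, 0 < m → hankel c m ≠ 0) (n : ℕ)
    (hv : ∀ j, j ≤ 2 * n → coeff j (Pgen c * Qs c n - As c n) = 0) : sig c n ≠ 0 := by
  refine sig_ne c n hH fun j h1 h2 => ?_
  have h3 := hv j h2
  rw [map_sub, sub_eq_zero] at h3
  rw [h3, coeff_As_big c n j (by omega)]

lemma coeff_R_sig (n : ℕ) :
    coeff (2 * n + 1) (Pgen c * Qs c n - As c n) = sig c n := by
  rw [map_sub, coeff_sig, coeff_As_big c n _ (by omega), sub_zero]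

lemma coeff_R_tau (n : ℕ) (h : sig c n ≠ 0) :
    coeff (2 * n + 2) (Pgen c * Qs c n - As c n) = tau c n * sig c n := by
  rw [map_sub, coeff_tau c n h, coeff_As_big c n _ (by omega), sub_zero]

lemma sig_zero_eq : sig c 0 = c 1 := by
  rw [sig_eq, Finset.sum_range_one, Nat.cast_zero, gst_Bc_zero, mul_one]

lemma vanish (hH : ∀ m : ℕ, 0 < m → hankel c m ≠ 0) : ∀ n : ℕ, ∀ j : ℕ, j ≤ 2 * n →
    coeff j (Pgen c * Qs c n - As c n) = 0
  | 0, j, hj => by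
    obtain rfl : j = 0 := by omega
    rw [Qs_zero, mul_one, show As c 0 = 0 from rfl, sub_zero, coeff_Pgen, if_pos rfl]
  | 1, j, hj => by
    have hs0 : sig c 0 ≠ 0 := sig_ne_of_vanish c hH 0 (vanish hH 0)
    have e : Pgen c * Qs c 1 - As c 1
        = (1 + C (graggQ c 1) * X) * (Pgen c * Qs c 0 - As c 0) - C (graggP c 1) * X := by
      rw [Qs_rec c 0, Qm_zero, Qs_zero, show As c 1 = C (graggP c 1) * X * Dd c 0 2 from rfl,
        show As c 0 = 0 from rfl, show Dd c 0 2 = 1 from rfl]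
      simp only [Nat.zero_add]
      ring
    have hR0 : ∀ i : ℕ, coeff i (Pgen c * Qs c 0 - As c 0) = coeff i (Pgen c) := by
      intro i; rw [Qs_zero, mul_one, show As c 0 = 0 from rfl, sub_zero]
    have h2 := coeff_R_tau c 0 hs0
    rw [hR0, coeff_Pgen] at h2
    norm_num at h2
    rw [e, coeff_comb1]
    interval_cases j
    · rw [if_neg (by omega), if_neg (by omega), hR0, coeff_Pgen, if_pos rfl]; ring
    · rw [if_pos (by omega), if_pos rfl, show (1 : ℕ) - 1 = 0 from rfl, hR0, hR0,
        coeff_Pgen, coeff_Pgen, if_pos rfl, if_neg (by omega), graggP_one, sig_zero_eq]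
      ring
    · rw [if_pos (by omega), if_neg (by omega), show (2 : ℕ) - 1 = 1 from rfl, hR0, hR0,
        coeff_Pgen, coeff_Pgen, if_neg (by omega), if_neg (by omega), graggQ_one]
      rw [sig_zero_eq] at h2
      linear_combination h2
  | (n + 2), j, hj => by
    have V1 : ∀ i : ℕ, i ≤ 2 * (n + 1) →
        coeff i (Pgen c * Qs c (n + 1) - As c (n + 1)) = 0 := vanish hH (n + 1)
    have V0 : ∀ i : ℕ, i ≤ 2 * n →
        coeff i (Pgen c * Qs c n - As c n) = 0 := vanish hH n
    have hs1 : sig c (n + 1) ≠ 0 := sig_ne_of_vanish c hH (n + 1) V1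
    have hs0 : sig c n ≠ 0 := sig_ne_of_vanish c hH n V0
    have e : Pgen c * Qs c (n + 2) - As c (n + 2)
        = (1 + C (graggQ c (n + 2)) * X) * (Pgen c * Qs c (n + 1) - As c (n + 1))
          - C (graggP c (n + 2)) * X ^ 2 * (Pgen c * Qs c n - As c n) := by
      rw [As_rec c n, Qs_rec c (n + 1), Qm_succ]
      ring
    rw [e, coeff_comb]
    rcases Nat.lt_or_ge j (2 * n + 3) with h | h
    · rw [V1 j (by omega)]
      by_cases h1 : 1 ≤ j
      · rw [if_pos h1, V1 (j - 1) (by omega)]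
        by_cases h2 : 2 ≤ j
        · rw [if_pos h2, V0 (j - 2) (by omega)]; ring
        · rw [if_neg h2]; ring
      · rw [if_neg h1, if_neg (by omega)]; ring
    · rcases Nat.eq_or_lt_of_le h with h' | h'
      · obtain rfl : j = 2 * n + 3 := h'.symm
        have hA : coeff (2 * n + 3) (Pgen c * Qs c (n + 1) - As c (n + 1))
            = sig c (n + 1) := by
          have := coeff_R_sig c (n + 1); rwa [show 2 * (n + 1) + 1 = 2 * n + 3 by ring] at this
        rw [if_pos (by omega), if_pos (by omega), show 2 * n + 3 - 1 = 2 * n + 2 by omega,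
          show 2 * n + 3 - 2 = 2 * n + 1 by omega, hA, V1 (2 * n + 2) (by omega),
          coeff_R_sig, graggP_succ_succ, div_mul_cancel₀ _ hs0]
        ring
      · obtain rfl : j = 2 * n + 4 := by omega
        have hA : coeff (2 * n + 4) (Pgen c * Qs c (n + 1) - As c (n + 1))
            = tau c (n + 1) * sig c (n + 1) := by
          have := coeff_R_tau c (n + 1) hs1
          rwa [show 2 * (n + 1) + 2 = 2 * n + 4 by ring] at this
        have hB : coeff (2 * n + 3) (Pgen c * Qs c (n + 1) - As c (n + 1))
            = sig c (n + 1) := by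
          have := coeff_R_sig c (n + 1); rwa [show 2 * (n + 1) + 1 = 2 * n + 3 by ring] at this
        have hp : graggP c (n + 2) * (tau c n * sig c n) = sig c (n + 1) * tau c n := by
          rw [graggP_succ_succ]
          field_simp
        rw [if_pos (by omega), if_pos (by omega), show 2 * n + 4 - 1 = 2 * n + 3 by omega,
          show 2 * n + 4 - 2 = 2 * n + 2 by omega, hA, hB, coeff_R_tau c n hs0,
          graggQ_succ_succ]
        linear_combination -hp

end GraggAux

/-- If the coefficients of the one-variable A-fraction are obtained from the
formal power series `P(z) = Σ_{r≥1} c_r z^r` by Gragg's algorithm, all Hankel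
determinants being nonzero, then the Taylor expansion of the `n`-th approximant
`F^{(n)}` agrees with `P` through degree `2n`:
`F^{(n)}(z) = Σ_{r=1}^{2n} c_r z^r + O(z^{2n+1})`. -/
theorem gragg_approx_correspondence (c : ℕ → ℂ)
    (hH : ∀ n : ℕ, 0 < n → hankel c n ≠ 0) :
    ∀ n : ℕ, 1 ≤ n → ∀ r : ℕ, r ≤ 2 * n →
      PowerSeries.coeff r (graggApprox c n) = if r = 0 then 0 else c r := by
  intro n hn r hr
  have hvan := GraggAux.vanish c hH n
  have hcc : PowerSeries.constantCoeff (GraggAux.Qs c n) ≠ 0 := by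
    rw [GraggAux.constantCoeff_Qs]; exact one_ne_zero
  have h1 : GraggAux.Pgen c - graggApprox c n
      = (GraggAux.Pgen c * GraggAux.Qs c n - GraggAux.As c n) * (GraggAux.Qs c n)⁻¹ := by
    have h0 : (GraggAux.Pgen c * GraggAux.Qs c n - GraggAux.As c n) * (GraggAux.Qs c n)⁻¹
        = GraggAux.Pgen c * (GraggAux.Qs c n * (GraggAux.Qs c n)⁻¹)
          - GraggAux.As c n * (GraggAux.Qs c n)⁻¹ := by ring
    rw [GraggAux.approx_eq c n hn, h0, PowerSeries.mul_inv_cancel _ hcc, mul_one]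
  have hdvd : (PowerSeries.X : PowerSeries ℂ) ^ (2 * n + 1)
      ∣ GraggAux.Pgen c - graggApprox c n := by
    rw [h1]
    exact Dvd.dvd.mul_right (PowerSeries.X_pow_dvd_iff.2 fun m hm => hvan m (by omega)) _
  have h2 := PowerSeries.X_pow_dvd_iff.1 hdvd r (by omega)
  rw [map_sub, sub_eq_zero] at h2
  rw [← h2, GraggAux.coeff_Pgen]
end

section
/- Under substitution z_i = 1/w_i for 1 ≤ i ≤ N and the equivalence transformation with factors ρ_{e_{i(k)}} = w_{i_k}, the n-th approximant f_n(z) of the multidimensional A-fraction with independent variables equals the n-th approximant f_n*(w) of the associated multidimensional J-fraction with independent variables, for every natural number n. -/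
/-- Tails of the multidimensional A-fraction with independent variables,
evaluated at a point `z ∈ ℂ^N`: below the branch `l = [i_k, …, i_1]`
(head = innermost index), to depth `fuel`,
`Σ_{i_{k+1} ≤ i_k} (−1)^{δ_{i_k,i_{k+1}}} p(i(k+1)) z_{i_k} z_{i_{k+1}} /
(1 + q(i(k+1)) z_{i_{k+1}} + tail)`. -/
noncomputable def tailA {N : ℕ} (p q : List (Fin N) → ℂ) :
    ℕ → List (Fin N) → (Fin N → ℂ) → ℂ
  | 0, _, _ => 0
  | fuel + 1, l, z =>
    match l with
    | [] => 0
    | ik :: _ =>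
      ∑ j ∈ Finset.Iic ik,
        ((if j = ik then -1 else 1) * p (j :: l) * z ik * z j) /
          (1 + q (j :: l) * z j + tailA p q fuel (j :: l) z)

/-- The `n`-th approximant of the multidimensional A-fraction with independent
variables. -/
noncomputable def approxA {N : ℕ} (p q : List (Fin N) → ℂ) (n : ℕ)
    (z : Fin N → ℂ) : ℂ :=
  ∑ i : Fin N, p [i] * z i / (1 + q [i] * z i + tailA p q (n - 1) [i] z)

/-- Tails of the associated multidimensional J-fraction with independent
variables, obtained by `z_i = 1/w_i` and the equivalence transformation with
factors `ρ_{e_{i(k)}} = w_{i_k}`. -/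
noncomputable def tailJ {N : ℕ} (p q : List (Fin N) → ℂ) :
    ℕ → List (Fin N) → (Fin N → ℂ) → ℂ
  | 0, _, _ => 0
  | fuel + 1, l, w =>
    match l with
    | [] => 0
    | ik :: _ =>
      ∑ j ∈ Finset.Iic ik,
        ((if j = ik then -1 else 1) * p (j :: l)) /
          (q (j :: l) + w j + tailJ p q fuel (j :: l) w)

/-- The `n`-th approximant of the multidimensional J-fraction with independent
variables. -/
noncomputable def approxJ {N : ℕ} (p q : List (Fin N) → ℂ) (n : ℕ)
    (w : Fin N → ℂ) : ℂ :=
  ∑ i : Fin N, p [i] / (q [i] + w i + tailJ p q (n - 1) [i] w)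

lemma tailA_eq_tailJ_div {N : ℕ} (p q : List (Fin N) → ℂ) (w : Fin N → ℂ)
    (hw : ∀ i, w i ≠ 0) :
    ∀ (fuel : ℕ) (ik : Fin N) (l : List (Fin N)),
      tailA p q fuel (ik :: l) (fun i => 1 / w i) =
        tailJ p q fuel (ik :: l) w / w ik := by
  intro fuel
  induction fuel with
  | zero => intro ik l; simp [tailA, tailJ]
  | succ f ih =>
    intro ik l
    show (∑ j ∈ Finset.Iic ik, _) = (∑ j ∈ Finset.Iic ik, _) / w ik
    rw [Finset.sum_div]
    refine Finset.sum_congr rfl fun j _ => ?_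
    rw [ih]
    set c := (if j = ik then (-1 : ℂ) else 1) * p (j :: ik :: l) with hc
    set t := tailJ p q f (j :: ik :: l) w with ht
    have hden : 1 + q (j :: ik :: l) * (1 / w j) + t / w j =
        (q (j :: ik :: l) + w j + t) / w j := by
      field_simp [hw j]; ring
    rw [hden, div_div_eq_mul_div]
    have hcan : c * (1 / w ik) * (1 / w j) * w j = c * (1 / w ik) := by
      have := hw j
      field_simp
    rw [hcan]
    ring

/-- Under the substitution `z_i = 1/w_i` and the equivalence transformation
with factors `ρ_{e_{i(k)}} = w_{i_k}`, the `n`-th approximant of the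
multidimensional A-fraction equals the `n`-th approximant of the associated
multidimensional J-fraction, for every `n`. -/
theorem approxA_eq_approxJ {N : ℕ} (p q : List (Fin N) → ℂ)
    (hp : ∀ l : List (Fin N), p l ≠ 0) (w : Fin N → ℂ) (hw : ∀ i, w i ≠ 0)
    (n : ℕ) (hn : 1 ≤ n) :
    approxA p q n (fun i => 1 / w i) = approxJ p q n w := by
  unfold approxA approxJ
  refine Finset.sum_congr rfl fun i _ => ?_
  rw [tailA_eq_tailJ_div p q w hw]
  set t := tailJ p q (n - 1) [i] w with ht
  have hden : 1 + q [i] * (1 / w i) + t / w i = (q [i] + w i + t) / w i := by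
    field_simp [hw i]; ring
  rw [hden, div_div_eq_mul_div]
  have hcan : p [i] * (1 / w i) * w i = p [i] := by
    rw [mul_one_div, div_mul_cancel₀ _ (hw i)]
  rw [hcan]
end

section
/- The Hankel determinants H(n) of the formal power series arctan(z) = Σ_{k=1}^∞ (−1)^{k+1} z^{2k−1}/(2k−1) are nonzero for all n ≥ 1, and Gragg's algorithm applied to this series produces coefficients p_1 = 1, p_k = −(k−1)²/((2k−3)(2k−1)) for k ≥ 2, and q_k = 0 for all k ≥ 1. -/
/-- The Taylor coefficients of `arctan`: `c_{2k−1} = (−1)^{k+1}/(2k−1)`,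
`c_{2k} = 0` (for `r = 2k−1` one has `k = (r+1)/2`). -/
noncomputable def arctanCoeff (r : ℕ) : ℂ :=
  if r % 2 = 1 then (-1) ^ ((r + 1) / 2 + 1) / (r : ℂ) else 0


open Finset Nat

/-- coefficients of the Gragg B polynomials for arctan -/
noncomputable def bb (n j : ℕ) : ℂ :=
  if 2*j ≤ n then ((n ! : ℂ)^2 * ((2*n-2*j)! : ℕ)) /
    ((j ! : ℕ) * ((n-2*j)! : ℕ) * ((n-j)! : ℕ) * ((2*n)! : ℕ)) else 0

noncomputable def BB (n : ℕ) : ℤ → ℂ := fun r =>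
  if 0 ≤ r ∧ r % 2 = 0 then bb n (r.toNat / 2) else 0

noncomputable def sg (n : ℕ) : ℂ :=
  (-1)^n * 4^n * (n ! : ℂ)^4 / (((2*n)! : ℕ) * ((2*n+1)! : ℕ))

noncomputable def rho (n : ℕ) : ℂ := (n:ℂ)^2 / ((2*n-1)*(2*n+1))

lemma fact_ne (n : ℕ) : ((n ! : ℕ) : ℂ) ≠ 0 := by
  exact_mod_cast (Nat.factorial_ne_zero n)

lemma bb_zero (n : ℕ) : bb n 0 = 1 := by
  simp only [bb, Nat.zero_le, if_pos, Nat.mul_zero, Nat.sub_zero, Nat.factorial_zero]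
  rw [div_eq_one_iff_eq (by
    exact mul_ne_zero (mul_ne_zero (mul_ne_zero (by norm_num) (fact_ne _)) (fact_ne _)) (fact_ne _))]
  push_cast; ring

lemma bb_eq_zero {n j : ℕ} (h : n < 2*j) : bb n j = 0 := by
  simp [bb, Nat.not_le.2 h]

lemma sg_ne_zero (n : ℕ) : sg n ≠ 0 := by
  unfold sg
  apply div_ne_zero
  · apply mul_ne_zero (mul_ne_zero (by norm_num) (by norm_num))
    exact pow_ne_zero _ (fact_ne n)
  · exact mul_ne_zero (fact_ne _) (fact_ne _)

lemma natc_ne {k : ℕ} (h : k ≠ 0) : (k:ℂ) ≠ 0 := Nat.cast_ne_zero.2 h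

lemma fsucc (a : ℕ) : ((a+1)! : ℂ) = ((a:ℂ)+1) * (a ! : ℕ) := by
  rw [Nat.factorial_succ]; push_cast; ring

lemma bb_of_le {n j : ℕ} (h : 2*j ≤ n) : bb n j =
    ((n ! : ℂ)^2 * ((2*n-2*j)! : ℕ)) /
    ((j ! : ℕ) * ((n-2*j)! : ℕ) * ((n-j)! : ℕ) * ((2*n)! : ℕ)) := by
  rw [bb, if_pos h]

lemma two_cast_sub_one_ne (m : ℕ) : 2*(((m+1) : ℕ):ℂ)-1 ≠ 0 := by
  have h2 : 1 ≤ 2*(m+1) := by omega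
  have : ((2*(m+1)-1 : ℕ) : ℂ) = 2*(((m+1):ℕ):ℂ)-1 := by
    push_cast [Nat.cast_sub h2]; ring
  rw [← this]; exact natc_ne (by omega)

lemma two_cast_add_one_ne (m : ℕ) : 2*((m : ℕ):ℂ)+1 ≠ 0 := by
  have : ((2*m+1 : ℕ) : ℂ) = 2*((m:ℕ):ℂ)+1 := by push_cast; ring
  rw [← this]; exact natc_ne (by omega)

set_option maxHeartbeats 1000000 in
lemma bbrec (n j : ℕ) : bb (n+2) (j+1) = bb (n+1) (j+1) + rho (n+1) * bb n j := by
  rcases lt_or_ge n (2*j) with hc | hc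
  · rw [bb_eq_zero (by omega), bb_eq_zero (by omega), bb_eq_zero (by omega)]
    ring
  rcases eq_or_lt_of_le hc with hb | hg
  · -- n = 2*j
    subst hb
    rw [show bb (2*j+1) (j+1) = 0 from bb_eq_zero (by omega),
      bb_of_le (show 2*(j+1) ≤ 2*j+2 by omega), bb_of_le (show 2*j ≤ 2*j by omega)]
    rw [rho]
    rw [show 2*(2*j+2)-2*(j+1) = 2*j+2 by omega, show 2*j+2-2*(j+1) = 0 by omega,
      show 2*j+2-(j+1) = j+1 by omega, show 2*(2*j+2) = 4*j+4 by omega,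
      show 2*(2*j)-2*j = 2*j by omega, show 2*j-2*j = 0 by omega,
      show 2*j-j = j by omega, show 2*(2*j) = 4*j by omega]
    rw [zero_add, _root_.div_mul_div_comm, div_eq_div_iff
      (by apply_rules [mul_ne_zero, fact_ne])
      (by apply_rules [mul_ne_zero, fact_ne, two_cast_add_one_ne]
          exact two_cast_sub_one_ne (2*j))]
    rw [show ((2*j+2)! : ℂ) = ((2:ℂ)*j+2)*((2:ℂ)*j+1)*((2*j)! : ℕ) by
        rw [show 2*j+2 = (2*j+1)+1 by omega, Nat.factorial_succ,
            show 2*j+1 = (2*j)+1 by omega, Nat.factorial_succ]; push_cast; ring,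
      show ((j+1)! : ℂ) = ((j:ℂ)+1)*(j ! : ℕ) from fsucc j,
      show ((4*j+4)! : ℂ) = ((4:ℂ)*j+4)*((4:ℂ)*j+3)*((4:ℂ)*j+2)*((4:ℂ)*j+1)*((4*j)! : ℕ) by
        rw [show 4*j+4 = (4*j+3)+1 by omega, Nat.factorial_succ,
            show 4*j+3 = (4*j+2)+1 by omega, Nat.factorial_succ,
            show 4*j+2 = (4*j+1)+1 by omega, Nat.factorial_succ,
            show 4*j+1 = (4*j)+1 by omega, Nat.factorial_succ]; push_cast; ring]
    push_cast
    ring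
  · -- generic : 2*j+1 ≤ n
    obtain ⟨t, rfl⟩ : ∃ t, n = t + 2*j + 1 := ⟨n - (2*j+1), by omega⟩
    rw [bb_of_le (show 2*(j+1) ≤ t+2*j+1+2 by omega),
      bb_of_le (show 2*(j+1) ≤ t+2*j+1+1 by omega), bb_of_le (show 2*j ≤ t+2*j+1 by omega), rho]
    rw [show 2*(t+2*j+1+2)-2*(j+1) = 2*t+2*j+4 by omega,
        show t+2*j+1+2-2*(j+1) = t+1 by omega,
        show t+2*j+1+2-(j+1) = t+j+2 by omega,
        show 2*(t+2*j+1+2) = 2*t+4*j+6 by omega,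
        show 2*(t+2*j+1+1)-2*(j+1) = 2*t+2*j+2 by omega,
        show t+2*j+1+1-2*(j+1) = t by omega,
        show t+2*j+1+1-(j+1) = t+j+1 by omega,
        show 2*(t+2*j+1+1) = 2*t+4*j+4 by omega,
        show 2*(t+2*j+1)-2*j = 2*t+2*j+2 by omega,
        show t+2*j+1-2*j = t+1 by omega,
        show t+2*j+1-j = t+j+1 by omega,
        show 2*(t+2*j+1) = 2*t+4*j+2 by omega]
    rw [_root_.div_mul_div_comm, div_add_div _ _
        (by apply_rules [mul_ne_zero, fact_ne])
        (by apply_rules [mul_ne_zero, fact_ne, two_cast_add_one_ne]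
            exact two_cast_sub_one_ne (t+2*j+1)),
      div_eq_div_iff
        (by apply_rules [mul_ne_zero, fact_ne])
        (by apply_rules [mul_ne_zero, fact_ne, two_cast_add_one_ne]
            exact two_cast_sub_one_ne (t+2*j+1))]
    rw [show ((t+2*j+1+2)! : ℂ) = ((t:ℂ)+2*j+3)*((t:ℂ)+2*j+2)*((t+2*j+1)! : ℕ) by
        rw [show t+2*j+1+2 = (t+2*j+2)+1 by omega, Nat.factorial_succ,
            show t+2*j+2 = (t+2*j+1)+1 by omega, Nat.factorial_succ]; push_cast; ring,
      show ((t+2*j+1+1)! : ℂ) = ((t:ℂ)+2*j+2)*((t+2*j+1)! : ℕ) by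
        rw [show t+2*j+1+1 = (t+2*j+1)+1 by omega, Nat.factorial_succ]; push_cast; ring,
      show ((2*t+2*j+4)! : ℂ) = ((2:ℂ)*t+2*j+4)*((2:ℂ)*t+2*j+3)*((2*t+2*j+2)! : ℕ) by
        rw [show 2*t+2*j+4 = (2*t+2*j+3)+1 by omega, Nat.factorial_succ,
            show 2*t+2*j+3 = (2*t+2*j+2)+1 by omega, Nat.factorial_succ]; push_cast; ring,
      show ((j+1)! : ℂ) = ((j:ℂ)+1)*(j ! : ℕ) from fsucc j,
      show ((t+1)! : ℂ) = ((t:ℂ)+1)*(t ! : ℕ) from fsucc t,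
      show ((t+j+2)! : ℂ) = ((t:ℂ)+j+2)*((t+j+1)! : ℕ) by
        rw [show t+j+2 = (t+j+1)+1 by omega, Nat.factorial_succ]; push_cast; ring,
      show ((2*t+4*j+6)! : ℂ) = ((2:ℂ)*t+4*j+6)*((2:ℂ)*t+4*j+5)*((2:ℂ)*t+4*j+4)*((2:ℂ)*t+4*j+3)*((2*t+4*j+2)! : ℕ) by
        rw [show 2*t+4*j+6 = (2*t+4*j+5)+1 by omega, Nat.factorial_succ,
            show 2*t+4*j+5 = (2*t+4*j+4)+1 by omega, Nat.factorial_succ,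
            show 2*t+4*j+4 = (2*t+4*j+3)+1 by omega, Nat.factorial_succ,
            show 2*t+4*j+3 = (2*t+4*j+2)+1 by omega, Nat.factorial_succ]; push_cast; ring,
      show ((2*t+4*j+4)! : ℂ) = ((2:ℂ)*t+4*j+4)*((2:ℂ)*t+4*j+3)*((2*t+4*j+2)! : ℕ) by
        rw [show 2*t+4*j+4 = (2*t+4*j+3)+1 by omega, Nat.factorial_succ,
            show 2*t+4*j+3 = (2*t+4*j+2)+1 by omega, Nat.factorial_succ]; push_cast; ring]
    push_cast
    ring

lemma arctan_even {r : ℕ} (h : r % 2 = 0) : arctanCoeff r = 0 := by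
  rw [arctanCoeff, if_neg (by omega)]

lemma arctan_odd (k : ℕ) : arctanCoeff (2*k+1) = (-1)^k / (2*(k:ℂ)+1) := by
  rw [arctanCoeff, if_pos (by omega), show (2*k+1+1)/2 + 1 = k+2 by omega]
  push_cast
  rw [show ((-1):ℂ)^(k+2) = (-1)^k by rw [pow_add]; norm_num]

lemma BB_neg {n : ℕ} {r : ℤ} (h : r < 0) : BB n r = 0 := by
  rw [BB, if_neg (by omega)]

lemma BB_coe (n r : ℕ) : BB n (r:ℤ) = if r % 2 = 0 then bb n (r/2) else 0 := by
  rw [BB]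
  by_cases h : r % 2 = 0
  · rw [if_pos ⟨by omega, by omega⟩, if_pos h, Int.toNat_natCast]
  · rw [if_neg (by omega), if_neg h]

lemma BB_zero (n : ℕ) : BB n 0 = 1 := by
  have := BB_coe n 0
  simpa [bb_zero] using this

lemma BB_top {n r : ℕ} (h : n < r) : BB n (r:ℤ) = 0 := by
  rw [BB_coe]
  by_cases h2 : r % 2 = 0
  · rw [if_pos h2]; exact bb_eq_zero (by omega)
  · rw [if_neg h2]

lemma BBrec (n : ℕ) (r : ℤ) : BB (n+2) r = BB (n+1) r + rho (n+1) * BB n (r-2) := by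
  rcases lt_trichotomy r 0 with h|h|h
  · rw [BB_neg h, BB_neg h, BB_neg (by omega)]; ring
  · subst h
    rw [BB_zero, BB_zero, BB_neg (by omega)]; ring
  · obtain ⟨k, rfl⟩ : ∃ k : ℕ, r = (k:ℤ) := ⟨r.toNat, (Int.toNat_of_nonneg h.le).symm⟩
    rcases Nat.even_or_odd k with ⟨j, hj⟩ | ⟨j, hj⟩
    · subst hj
      rcases Nat.eq_zero_or_pos j with rfl | hj1
      · norm_num
        rw [BB_zero, BB_zero, BB_neg (by omega)]; ring
      · obtain ⟨i, rfl⟩ : ∃ i, j = i + 1 := ⟨j - 1, by omega⟩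
        rw [show ((((i+1)+(i+1):ℕ)):ℤ) - 2 = ((i+i : ℕ) : ℤ) by push_cast; ring]
        rw [BB_coe, BB_coe, BB_coe, if_pos (by omega), if_pos (by omega), if_pos (by omega),
          show (i+1+(i+1))/2 = i+1 by omega, show (i+i)/2 = i by omega]
        exact bbrec n i
    · subst hj
      rw [show (((2*j+1:ℕ)):ℤ) - 2 = ((2*j:ℕ) : ℤ) - 1 by push_cast; ring]
      rw [BB_coe, BB_coe, if_neg (by omega), if_neg (by omega)]
      rcases Nat.eq_zero_or_pos j with rfl | hj1
      · rw [show ((2*0:ℕ):ℤ) - 1 = -1 by norm_num, BB_neg (by omega)]; ring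
      · rw [show ((2*j:ℕ):ℤ) - 1 = ((2*j-1:ℕ):ℤ) by push_cast [Nat.cast_sub (by omega : 1 ≤ 2*j)]; ring,
          BB_coe, if_neg (by omega)]
        ring

noncomputable def GG (n m : ℕ) : ℂ :=
  ∑ r ∈ Finset.range (n+1), arctanCoeff (2*m+1-r) * BB n (r:ℤ)

noncomputable def Gf (n m : ℕ) : ℂ :=
  if m < n then 0 else
    (-1)^m * 4^n * ((n ! : ℕ):ℂ)^2 * (m ! : ℕ) * ((2*m-n)! : ℕ) /
      (((2*n)! : ℕ) * ((m-n)! : ℕ) * ((2*m+1)! : ℕ))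

lemma GGrec (n m : ℕ) (hm : n ≤ 2*m) :
    GG (n+2) (m+1) = GG (n+1) (m+1) + rho (n+1) * GG n m := by
  unfold GG
  simp only [BBrec n]
  have hsplit : ∀ r:ℕ, arctanCoeff (2*(m+1)+1-r) * (BB (n+1) (r:ℤ) + rho (n+1) * BB n ((r:ℤ)-2))
      = arctanCoeff (2*(m+1)+1-r) * BB (n+1) (r:ℤ)
        + arctanCoeff (2*(m+1)+1-r) * (rho (n+1) * BB n ((r:ℤ)-2)) := fun r => mul_add _ _ _
  simp only [hsplit]
  rw [Finset.sum_add_distrib]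
  congr 1
  · rw [Finset.sum_range_succ (fun r => arctanCoeff (2*(m+1)+1-r) * BB (n+1) (r:ℤ))]
    rw [BB_top (by omega), mul_zero, add_zero]
  · rw [Finset.mul_sum]
    rw [Finset.sum_range_succ' (fun r => arctanCoeff (2*(m+1)+1-r) * (rho (n+1) * BB n ((r:ℤ)-2)))]
    rw [Finset.sum_range_succ' (fun r => arctanCoeff (2*(m+1)+1-(r+1)) * (rho (n+1) * BB n (((r+1):ℕ)-2)))]
    rw [show ((0:ℕ):ℤ) - 2 = -2 by norm_num, show (((0+1:ℕ)):ℤ) - 2 = -1 by norm_num,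
        BB_neg (show (-2:ℤ) < 0 by norm_num), BB_neg (show (-1:ℤ) < 0 by norm_num)]
    simp only [mul_zero, zero_mul, add_zero]
    apply Finset.sum_congr rfl
    intro r hr
    simp only [Finset.mem_range] at hr
    rw [show 2*(m+1)+1-(r+1+1) = 2*m+1-r by omega,
        show (((r+1+1:ℕ)):ℤ) - 2 = (r:ℤ) by push_cast; ring]
    ring

set_option maxHeartbeats 1000000 in
lemma Gfrec (k m : ℕ) : Gf (k+2) (m+1) = Gf (k+1) (m+1) + rho (k+1) * Gf k m := by
  rcases lt_or_ge m k with hc | hc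
  · rw [Gf, if_pos (by omega), Gf, if_pos (by omega), Gf, if_pos (by omega)]
    ring
  rcases eq_or_lt_of_le hc with hb | hg
  · -- m = k : 0 = Gf (k+1) (k+1) + rho (k+1) * Gf k k
    subst hb
    rw [Gf, if_pos (by omega), Gf, if_neg (by omega), Gf, if_neg (by omega)]
    rw [show 2*(k+1)-(k+1) = k+1 by omega, show (k+1)-(k+1) = 0 by omega,
        show 2*k-k = k by omega, show k-k = 0 by omega, rho]
    rw [_root_.div_mul_div_comm, div_add_div _ _
        (by apply_rules [mul_ne_zero, fact_ne])
        (by apply_rules [mul_ne_zero, fact_ne, two_cast_add_one_ne]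
            exact two_cast_sub_one_ne k)]
    symm
    rw [div_eq_zero_iff]
    left
    rw [show ((k+1)! : ℂ) = ((k:ℂ)+1)*(k ! : ℕ) from fsucc k,
      show ((2*(k+1))! : ℂ) = ((2:ℂ)*k+2)*((2:ℂ)*k+1)*((2*k)! : ℕ) by
        rw [show 2*(k+1) = (2*k+1)+1 by omega, Nat.factorial_succ,
            show 2*k+1 = (2*k)+1 by omega, Nat.factorial_succ]; push_cast; ring,
      show ((2*(k+1)+1)! : ℂ) = ((2:ℂ)*k+3)*((2:ℂ)*k+2)*((2:ℂ)*k+1)*((2*k)! : ℕ) by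
        rw [show 2*(k+1)+1 = (2*k+2)+1 by omega, Nat.factorial_succ,
            show 2*k+2 = (2*k+1)+1 by omega, Nat.factorial_succ,
            show 2*k+1 = (2*k)+1 by omega, Nat.factorial_succ]; push_cast; ring,
      show ((2*k+1)! : ℂ) = ((2:ℂ)*k+1)*((2*k)! : ℕ) by
        rw [show 2*k+1 = (2*k)+1 by omega, Nat.factorial_succ]; push_cast; ring]
    push_cast
    ring
  · -- generic : k+1 ≤ m
    obtain ⟨t, rfl⟩ : ∃ t, m = t + k + 1 := ⟨m - (k+1), by omega⟩
    rw [Gf, if_neg (by omega), Gf, if_neg (by omega), Gf, if_neg (by omega)]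
    rw [show 2*(t+k+1+1)-(k+2) = k+2*t+2 by omega,
        show (t+k+1+1)-(k+2) = t by omega,
        show 2*(t+k+1+1)-(k+1) = k+2*t+3 by omega,
        show (t+k+1+1)-(k+1) = t+1 by omega,
        show 2*(t+k+1)-k = k+2*t+2 by omega,
        show (t+k+1)-k = t+1 by omega, rho]
    rw [_root_.div_mul_div_comm, div_add_div _ _
        (by apply_rules [mul_ne_zero, fact_ne])
        (by apply_rules [mul_ne_zero, fact_ne, two_cast_add_one_ne]
            exact two_cast_sub_one_ne k),
      div_eq_div_iff
        (by apply_rules [mul_ne_zero, fact_ne])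
        (by apply_rules [mul_ne_zero, fact_ne, two_cast_add_one_ne]
            exact two_cast_sub_one_ne k)]
    rw [show ((k+2)! : ℂ) = ((k:ℂ)+2)*((k:ℂ)+1)*(k ! : ℕ) by
        rw [show k+2 = (k+1)+1 by omega, Nat.factorial_succ, Nat.factorial_succ]; push_cast; ring,
      show ((k+1)! : ℂ) = ((k:ℂ)+1)*(k ! : ℕ) from fsucc k,
      show ((t+k+1+1)! : ℂ) = ((t:ℂ)+k+2)*((t+k+1)! : ℕ) by
        rw [show t+k+1+1 = (t+k+1)+1 by omega, Nat.factorial_succ]; push_cast; ring,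
      show ((k+2*t+3)! : ℂ) = ((k:ℂ)+2*t+3)*((k+2*t+2)! : ℕ) by
        rw [show k+2*t+3 = (k+2*t+2)+1 by omega, Nat.factorial_succ]; push_cast; ring,
      show ((2*(k+2))! : ℂ) = ((2:ℂ)*k+4)*((2:ℂ)*k+3)*((2:ℂ)*k+2)*((2:ℂ)*k+1)*((2*k)! : ℕ) by
        rw [show 2*(k+2) = (2*k+3)+1 by omega, Nat.factorial_succ,
            show 2*k+3 = (2*k+2)+1 by omega, Nat.factorial_succ,
            show 2*k+2 = (2*k+1)+1 by omega, Nat.factorial_succ,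
            show 2*k+1 = (2*k)+1 by omega, Nat.factorial_succ]; push_cast; ring,
      show ((2*(k+1))! : ℂ) = ((2:ℂ)*k+2)*((2:ℂ)*k+1)*((2*k)! : ℕ) by
        rw [show 2*(k+1) = (2*k+1)+1 by omega, Nat.factorial_succ,
            show 2*k+1 = (2*k)+1 by omega, Nat.factorial_succ]; push_cast; ring,
      show ((t+1)! : ℂ) = ((t:ℂ)+1)*(t ! : ℕ) from fsucc t,
      show ((2*(t+k+1+1)+1)! : ℂ) = ((2:ℂ)*t+2*k+5)*((2:ℂ)*t+2*k+4)*((2*(t+k+1)+1)! : ℕ) by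
        rw [show 2*(t+k+1+1)+1 = (2*(t+k+1)+2)+1 by omega, Nat.factorial_succ,
            show 2*(t+k+1)+2 = (2*(t+k+1)+1)+1 by omega, Nat.factorial_succ]; push_cast; ring]
    push_cast
    ring

lemma GG_base0 (m : ℕ) : GG 0 m = Gf 0 m := by
  rw [GG, Finset.sum_range_one, show ((0:ℕ):ℤ) = (0:ℤ) by norm_num, BB_zero,
    show 2*m+1-0 = 2*m+1 by omega, arctan_odd, Gf, if_neg (by omega)]
  rw [show 2*m-0 = 2*m by omega, show m-0 = m by omega,
    show ((2*m+1)! : ℂ) = ((2:ℂ)*m+1)*((2*m)! : ℕ) by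
      rw [show 2*m+1 = (2*m)+1 by omega, Nat.factorial_succ]; push_cast; ring]
  rw [mul_one, div_eq_div_iff (two_cast_add_one_ne m)
    (by apply_rules [mul_ne_zero, fact_ne, two_cast_add_one_ne])]
  push_cast
  simp only [Nat.factorial_zero, Nat.cast_one]
  ring

lemma GG_base1 (m : ℕ) (hm : 1 ≤ m) : GG 1 m = Gf 1 m := by
  obtain ⟨i, rfl⟩ : ∃ i, m = i + 1 := ⟨m - 1, by omega⟩
  rw [GG, Finset.sum_range_succ, Finset.sum_range_one,
    show ((0:ℕ):ℤ) = (0:ℤ) by norm_num, BB_zero,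
    show ((1:ℕ):ℤ) = (1:ℤ) by norm_num]
  rw [show (1:ℤ) = ((1:ℕ):ℤ) by norm_num, BB_coe, if_neg (by omega), mul_zero, add_zero]
  rw [show 2*(i+1)+1-0 = 2*(i+1)+1 by omega, arctan_odd, Gf, if_neg (by omega)]
  rw [show 2*(i+1)-1 = 2*i+1 by omega, show (i+1)-1 = i by omega]
  rw [show ((2*(i+1)+1)! : ℂ) = ((2:ℂ)*i+3)*((2:ℂ)*i+2)*((2*i+1)! : ℕ) by
      rw [show 2*(i+1)+1 = (2*i+2)+1 by omega, Nat.factorial_succ,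
          show 2*i+2 = (2*i+1)+1 by omega, Nat.factorial_succ]; push_cast; ring,
    show ((i+1)! : ℂ) = ((i:ℂ)+1)*(i ! : ℕ) from fsucc i]
  rw [mul_one, div_eq_div_iff (two_cast_add_one_ne (i+1))
    (by
      have a1 : ((2*i+3:ℕ):ℂ) ≠ 0 := natc_ne (by omega)
      have a2 : ((2*i+2:ℕ):ℂ) ≠ 0 := natc_ne (by omega)
      push_cast at a1 a2
      apply_rules [mul_ne_zero, fact_ne, a1, a2])]
  push_cast
  simp only [Nat.factorial_one, Nat.factorial_two, Nat.cast_one, Nat.cast_ofNat]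
  ring

lemma GG_eq : ∀ n m : ℕ, n ≤ 2*m → GG n m = Gf n m := by
  intro n
  induction n using Nat.strong_induction_on with
  | _ n ih =>
    match n with
    | 0 => exact fun m _ => GG_base0 m
    | 1 => exact fun m hm => GG_base1 m (by omega)
    | (k+2) => {
        intro m hm
        obtain ⟨i, rfl⟩ : ∃ i, m = i + 1 := ⟨m - 1, by omega⟩
        rw [GGrec k i (by omega), ih (k+1) (by omega) (i+1) (by omega),
          ih k (by omega) i (by omega), Gfrec] }

lemma Gf_diag (n : ℕ) : Gf n n = sg n := by
  rw [Gf, if_neg (lt_irrefl n), sg, show 2*n-n = n by omega, show n-n = 0 by omega,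
    Nat.factorial_zero, Nat.cast_one]
  ring

lemma sg_zero : sg 0 = 1 := by
  rw [sg]; norm_num

lemma sg_succ (m : ℕ) : sg (m+1) = -(rho (m+1)) * sg m := by
  rw [sg, sg, rho, ← neg_div, _root_.div_mul_div_comm]
  rw [show 2*(m+1) = 2*m+2 by omega, show 2*m+2+1 = 2*m+3 by omega]
  rw [div_eq_div_iff
    (by apply_rules [mul_ne_zero, fact_ne])
    (by apply_rules [mul_ne_zero, fact_ne, two_cast_sub_one_ne m, two_cast_add_one_ne])]
  rw [show ((m+1)! : ℂ) = ((m:ℂ)+1)*(m ! : ℕ) from fsucc m,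
    show ((2*m+2)! : ℂ) = ((2:ℂ)*m+2)*((2:ℂ)*m+1)*((2*m)! : ℕ) by
      rw [show 2*m+2 = (2*m+1)+1 by omega, Nat.factorial_succ,
          show 2*m+1 = (2*m)+1 by omega, Nat.factorial_succ]; push_cast; ring,
    show ((2*m+3)! : ℂ) = ((2:ℂ)*m+3)*((2:ℂ)*m+2)*((2*m+1)! : ℕ) by
      rw [show 2*m+3 = (2*m+2)+1 by omega, Nat.factorial_succ,
          show 2*m+2 = (2*m+1)+1 by omega, Nat.factorial_succ]; push_cast; ring]
  push_cast
  ring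

lemma tau_zero (n : ℕ) :
    (∑ r ∈ Finset.range (n+1), arctanCoeff (2*n+2-r) * BB n (r:ℤ)) = 0 := by
  apply Finset.sum_eq_zero
  intro r hr
  simp only [Finset.mem_range] at hr
  by_cases h : r % 2 = 0
  · rw [arctan_even (by omega), zero_mul]
  · rw [BB_coe, if_neg h, mul_zero]

lemma gstep_sp (c : ℕ → ℂ) (n : ℕ) (s : GState) :
    (gstep c n s).sp = ∑ r ∈ Finset.range (n+1), c (2*n+1-r) * s.Bc r := rfl

lemma gstep_tp (c : ℕ → ℂ) (n : ℕ) (s : GState) :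
    (gstep c n s).tp = (∑ r ∈ Finset.range (n+1), c (2*n+2-r) * s.Bc r) /
      (∑ r ∈ Finset.range (n+1), c (2*n+1-r) * s.Bc r) := rfl

lemma gstep_Bp (c : ℕ → ℂ) (n : ℕ) (s : GState) : (gstep c n s).Bp = s.Bc := rfl

lemma gstep_Bc (c : ℕ → ℂ) (n : ℕ) (s : GState) (r : ℤ) :
    (gstep c n s).Bc r = if r = 0 then 1 else if r < 0 then 0
      else s.Bc r + (s.tp - (gstep c n s).tp) * s.Bc (r - 1)
        - ((gstep c n s).sp / s.sp) * s.Bp (r - 2) := rfl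

lemma gst_succ (c : ℕ → ℂ) (n : ℕ) : gst c (n+1) = gstep c n (gst c n) := rfl

lemma BB_one_eq (r : ℤ) : BB 1 r = BB 0 r := by
  rcases lt_trichotomy r 0 with h|h|h
  · rw [BB_neg h, BB_neg h]
  · subst h; rw [BB_zero, BB_zero]
  · obtain ⟨k, rfl⟩ : ∃ k : ℕ, r = (k:ℤ) := ⟨r.toNat, (Int.toNat_of_nonneg h.le).symm⟩
    rw [BB_coe, BB_coe]
    by_cases h2 : k % 2 = 0
    · rw [if_pos h2, if_pos h2]
      have hk : 1 ≤ k := by exact_mod_cast h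
      rw [bb_eq_zero (by omega), bb_eq_zero (by omega)]
    · rw [if_neg h2, if_neg h2]

lemma gst_inv (n : ℕ) : (gst arctanCoeff n).Bc = BB n ∧ (gst arctanCoeff n).sp = sg (n-1) ∧
    (gst arctanCoeff n).tp = 0 ∧
    (gst arctanCoeff n).Bp = (if n = 0 then (0:ℤ→ℂ) else BB (n-1)) := by
  induction n with
  | zero =>
    refine ⟨?_, by rw [show (0-1 : ℕ) = 0 from rfl, sg_zero]; rfl, rfl, rfl⟩
    funext r
    show (if r = 0 then 1 else 0) = BB 0 r
    rcases lt_trichotomy r 0 with h|h|h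
    · rw [BB_neg h, if_neg (by omega)]
    · subst h; rw [BB_zero, if_pos rfl]
    · obtain ⟨k, rfl⟩ : ∃ k : ℕ, r = (k:ℤ) := ⟨r.toNat, (Int.toNat_of_nonneg h.le).symm⟩
      have hk : 1 ≤ k := by exact_mod_cast h
      rw [if_neg (by omega), BB_coe]
      by_cases h2 : k % 2 = 0
      · rw [if_pos h2, bb_eq_zero (by omega)]
      · rw [if_neg h2]
  | succ n ihn =>
    obtain ⟨hBc, hsp, htp, hBp⟩ := ihn
    have hsc : (gst arctanCoeff (n+1)).sp = sg n := by
      rw [gst_succ, gstep_sp, hBc, ← GG, GG_eq n n (by omega), Gf_diag]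
    have htc : (gst arctanCoeff (n+1)).tp = 0 := by
      rw [gst_succ, gstep_tp, hBc, tau_zero, zero_div]
    refine ⟨?_, by rw [hsc]; rfl, htc, by rw [gst_succ, gstep_Bp, hBc]; simp⟩
    funext r
    rw [gst_succ, gstep_Bc, ← gst_succ, htc, htp, hBc, hsc, hsp, hBp, sub_zero, zero_mul, add_zero]
    match n with
    | 0 =>
      rw [show (if (0:ℕ) = 0 then (0:ℤ→ℂ) else BB (0-1)) = 0 from if_pos rfl]
      simp only [Pi.zero_apply, mul_zero, sub_zero]
      rcases lt_trichotomy r 0 with h|h|h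
      · rw [if_neg (by omega), if_pos h, BB_neg h]
      · subst h; rw [if_pos rfl, BB_zero]
      · rw [if_neg (by omega), if_neg (by omega), BB_one_eq]
    | (m+1) =>
      rw [show (if m+1 = 0 then (0:ℤ→ℂ) else BB (m+1-1)) = BB m from if_neg (Nat.succ_ne_zero m),
        show (m+1-1 : ℕ) = m from rfl]
      have hdiv : sg (m+1) / sg m = -(rho (m+1)) := by
        rw [sg_succ, mul_div_assoc, div_self (sg_ne_zero m), mul_one]
      rw [hdiv]
      rcases lt_trichotomy r 0 with h|h|h
      · rw [if_neg (by omega), if_pos h, BB_neg h]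
      · subst h; rw [if_pos rfl, BB_zero]
      · rw [if_neg (by omega), if_neg (by omega), BBrec m r]
        ring

lemma graggP_one : graggP arctanCoeff 1 = 1 := by
  rw [graggP, (gst_inv 1).2.1, show (1-1:ℕ) = 0 from rfl, (gst_inv 0).2.1,
    show (0-1:ℕ) = 0 from rfl, sg_zero]
  norm_num

lemma graggP_ge (k : ℕ) (hk : 2 ≤ k) :
    graggP arctanCoeff k = -(((k : ℂ) - 1) ^ 2 / ((2 * (k : ℂ) - 3) * (2 * (k : ℂ) - 1))) := by
  obtain ⟨j, rfl⟩ : ∃ j, k = j + 2 := ⟨k - 2, by omega⟩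
  rw [graggP, (gst_inv (j+2)).2.1, show (j+2-1:ℕ) = j+1 from rfl, (gst_inv (j+1)).2.1,
    show (j+1-1:ℕ) = j from rfl]
  rw [sg_succ j, mul_div_assoc, div_self (sg_ne_zero j), mul_one, rho]
  push_cast
  have d1 : 2*((j:ℂ)+1) - 1 ≠ 0 := by
    have := two_cast_sub_one_ne j; push_cast at this; exact this
  have d2 : 2*((j:ℂ)+1) + 1 ≠ 0 := by
    have := two_cast_add_one_ne (j+1); push_cast at this; exact this
  have d3 : 2*((j:ℂ)+2) - 3 ≠ 0 := by
    have := two_cast_sub_one_ne j; push_cast at this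
    intro h; apply this; linear_combination h
  have d4 : 2*((j:ℂ)+2) - 1 ≠ 0 := by
    have := two_cast_add_one_ne (j+1); push_cast at this
    intro h; apply this; linear_combination h
  rw [neg_inj, div_eq_div_iff (mul_ne_zero d1 d2) (mul_ne_zero d3 d4)]
  ring

lemma graggQ_eq (k : ℕ) : graggQ arctanCoeff k = 0 := by
  rw [graggQ, (gst_inv k).2.2.1, (gst_inv (k-1)).2.2.1, sub_zero]

noncomputable def Nr (n : ℕ) : Matrix (Fin n) (Fin n) ℝ :=
  Matrix.of fun i j => if (i.1+j.1) % 2 = 0 then ((i.1+j.1+1 : ℕ):ℝ)⁻¹ else 0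

lemma Nr_int {n : ℕ} (i j : Fin n) :
    Nr n i j = (1/2) * ∫ x in (-1:ℝ)..1, x^(i.1+j.1) := by
  rw [integral_pow]
  rcases Nat.even_or_odd (i.1+j.1) with he | ho
  · obtain ⟨t, ht⟩ := he
    rw [Nr, Matrix.of_apply, if_pos (by omega)]
    rw [Odd.neg_one_pow ⟨t, by omega⟩, one_pow]
    have hx : ((i.1:ℝ)+(j.1:ℝ)+1) ≠ 0 := by positivity
    push_cast
    rw [show (1:ℝ) - -1 = 2 by norm_num]
    field_simp
  · obtain ⟨t, ht⟩ := ho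
    rw [Nr, Matrix.of_apply, if_neg (by omega)]
    rw [Even.neg_one_pow ⟨t+1, by omega⟩, one_pow]
    norm_num

set_option maxHeartbeats 1000000 in
lemma Nr_posdef (n : ℕ) : (Nr n).PosDef := by
  rw [Matrix.posDef_iff_dotProduct_mulVec]
  constructor
  · show Matrix.conjTranspose (Nr n) = Nr n
    ext i j
    simp only [Matrix.conjTranspose_apply, Nr, Matrix.of_apply, star_trivial]
    rw [Nat.add_comm j.1 i.1]
  · intro x hx
    -- star x = x over ℝ
    have hsx : star x = x := funext fun i => star_trivial _
    rw [hsx]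
    -- the polynomial
    set p : Polynomial ℝ := ∑ i : Fin n, Polynomial.monomial i.1 (x i) with hp
    have hpev : ∀ t : ℝ, p.eval t = ∑ i : Fin n, x i * t^(i.1) := by
      intro t
      rw [hp, Polynomial.eval_finset_sum]
      exact Finset.sum_congr rfl fun i _ => Polynomial.eval_monomial
    have hpne : p ≠ 0 := by
      intro h0
      apply hx
      funext i
      have : p.coeff i.1 = x i := by
        rw [hp, Polynomial.finset_sum_coeff]
        rw [Finset.sum_eq_single i]
        · exact Polynomial.coeff_monomial_same _ _
        · intro b _ hb
          exact Polynomial.coeff_monomial_of_ne _ (fun hc => hb (Fin.ext hc.symm))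
        · intro hni; exact absurd (Finset.mem_univ i) hni
      rw [h0] at this
      simp only [Polynomial.coeff_zero] at this
      exact this.symm ▸ rfl
    have h1 : ∀ t : ℝ, (p.eval t)^2 = ∑ i : Fin n, ∑ j : Fin n, (x i * x j) * t^(i.1+j.1) := by
      intro t
      rw [sq, hpev, Finset.sum_mul_sum]
      apply Finset.sum_congr rfl; intro i _
      apply Finset.sum_congr rfl; intro j _
      rw [pow_add]; ring
    have h2 : ∫ t in (-1:ℝ)..1, (p.eval t)^2 =
        ∑ i : Fin n, ∑ j : Fin n, (x i * x j) * ∫ t in (-1:ℝ)..1, t^(i.1+j.1) := by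
      rw [intervalIntegral.integral_congr
        (g := fun t => ∑ i : Fin n, ∑ j : Fin n, (x i * x j) * t^(i.1+j.1)) (fun t _ => h1 t)]
      rw [intervalIntegral.integral_finset_sum (f := fun i t => ∑ j : Fin n, (x i * x j) * t^(i.1+j.1)) (fun i _ =>
        (continuous_finset_sum _ (fun j _ =>
          continuous_const.mul (continuous_pow _))).intervalIntegrable _ _)]
      refine Finset.sum_congr rfl fun i _ => ?_
      rw [intervalIntegral.integral_finset_sum (f := fun j t => (x i * x j) * t^(i.1+j.1)) (fun j _ =>
        ((continuous_const.mul (continuous_pow _)).intervalIntegrable _ _))]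
      refine Finset.sum_congr rfl fun j _ => ?_
      exact intervalIntegral.integral_const_mul _ _
    have h3 : dotProduct x ((Nr n).mulVec x) = ∑ i, ∑ j, (x i * x j) * Nr n i j := by
      simp only [dotProduct, Matrix.mulVec, Finset.mul_sum]
      exact Finset.sum_congr rfl fun i _ => Finset.sum_congr rfl fun j _ => by ring
    have key : dotProduct x ((Nr n).mulVec x) =
        (1/2) * ∫ t in (-1:ℝ)..1, (p.eval t)^2 := by
      rw [h3, h2, Finset.mul_sum]
      refine Finset.sum_congr rfl fun i _ => ?_
      rw [Finset.mul_sum]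
      refine Finset.sum_congr rfl fun j _ => ?_
      rw [Nr_int]
      ring
    rw [key]
    have hpos : 0 < ∫ t in (-1:ℝ)..1, (p.eval t)^2 := by
      rw [intervalIntegral.integral_pos_iff_support_of_nonneg_ae'
        (Filter.Eventually.of_forall (fun t => sq_nonneg _))
        (((p.continuous.pow 2)).intervalIntegrable _ _)]
      refine ⟨by norm_num, ?_⟩
      have hroots : MeasureTheory.volume {t : ℝ | p.IsRoot t} = 0 :=
        (Polynomial.finite_setOf_isRoot hpne).measure_zero _
      have hsub : Set.Ioc (-1:ℝ) 1 \ {t : ℝ | p.IsRoot t} ⊆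
          Function.support (fun t => (p.eval t)^2) ∩ Set.Ioc (-1:ℝ) 1 := by
        rintro t ⟨ht1, ht2⟩
        exact ⟨pow_ne_zero _ ht2, ht1⟩
      calc (0:ENNReal) < MeasureTheory.volume (Set.Ioc (-1:ℝ) 1 \ {t : ℝ | p.IsRoot t}) := by
            rw [MeasureTheory.measure_diff_null hroots, Real.volume_Ioc]
            norm_num
        _ ≤ _ := MeasureTheory.measure_mono hsub
    positivity

lemma Nr_det_ne (n : ℕ) : (Nr n).det ≠ 0 := ne_of_gt (Nr_posdef n).det_pos

lemma hankel_ne (n : ℕ) : hankel arctanCoeff n ≠ 0 := by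
  have hfac : (Matrix.of fun i j : Fin n => arctanCoeff (i.1 + j.1 + 1)) =
      Matrix.diagonal (fun i : Fin n => Complex.I ^ i.1) *
        ((Nr n).map (Complex.ofRealHom : ℝ →+* ℂ)) *
        Matrix.diagonal (fun i : Fin n => Complex.I ^ i.1) := by
    ext i j
    rw [Matrix.mul_diagonal, Matrix.diagonal_mul, Matrix.of_apply, Matrix.map_apply]
    rcases Nat.even_or_odd (i.1+j.1) with ⟨s, hs⟩ | ⟨s, hs⟩
    · rw [Nr, Matrix.of_apply, if_pos (by omega)]
      rw [show i.1+j.1+1 = 2*s+1 by omega, arctan_odd]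
      have hij : Complex.I ^ i.1 * Complex.I ^ j.1 = (-1)^s := by
        rw [← pow_add, show i.1 + j.1 = 2*s by omega, pow_mul, Complex.I_sq]
      rw [map_inv₀, Complex.ofRealHom_eq_coe, Complex.ofReal_natCast]
      have hre : ∀ x : ℂ, Complex.I ^ i.1 * x * Complex.I ^ j.1 = (-1)^s * x := by
        intro x
        rw [mul_comm (Complex.I ^ i.1) x, mul_assoc, hij]; ring
      rw [hre, div_eq_mul_inv]
      congr 1
      rw [show ((2*s+1 : ℕ):ℂ) = 2*(s:ℂ)+1 by push_cast; ring]
    · rw [Nr, Matrix.of_apply, if_neg (by omega)]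
      rw [show i.1+j.1+1 = 2*(s+1) by omega, arctan_even (by omega)]
      simp
  rw [hankel, hfac, Matrix.det_mul, Matrix.det_mul, Matrix.det_diagonal,
    show (Nr n).map (⇑(Complex.ofRealHom : ℝ →+* ℂ)) = (Complex.ofRealHom : ℝ →+* ℂ).mapMatrix (Nr n)
      from (RingHom.mapMatrix_apply _ _).symm,
    ← RingHom.map_det]
  apply mul_ne_zero (mul_ne_zero ?_ ?_) ?_
  · exact Finset.prod_ne_zero_iff.2 fun i _ => pow_ne_zero _ Complex.I_ne_zero
  · simp only [Complex.ofRealHom_eq_coe, ne_eq, Complex.ofReal_eq_zero]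
    exact Nr_det_ne n
  · exact Finset.prod_ne_zero_iff.2 fun i _ => pow_ne_zero _ Complex.I_ne_zero

/-- The Hankel determinants of the series of `arctan` are nonzero, and Gragg's
algorithm applied to this series produces `p_1 = 1`,
`p_k = −(k−1)²/((2k−3)(2k−1))` for `k ≥ 2`, and `q_k = 0` for all `k ≥ 1`. -/
theorem arctan_gragg :
    (∀ n : ℕ, 0 < n → hankel arctanCoeff n ≠ 0) ∧
    graggP arctanCoeff 1 = 1 ∧
    (∀ k : ℕ, 2 ≤ k → graggP arctanCoeff k =
      -(((k : ℂ) - 1) ^ 2 / ((2 * (k : ℂ) - 3) * (2 * (k : ℂ) - 1)))) ∧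
    (∀ k : ℕ, 1 ≤ k → graggQ arctanCoeff k = 0) :=
  ⟨fun n _ => hankel_ne n, graggP_one, fun k hk => graggP_ge k hk, fun k _ => graggQ_eq k⟩
end

section
/- Let P(z) = Σ_{r≥1} c_r z^r be an odd formal power series (c_{2k} = 0 for all k ≥ 1) such that Gragg's algorithm applied to P is well defined (all Hankel determinants nonzero). Then all coefficients q_n produced by the algorithm vanish: q_n = 0 for every n ≥ 1. -/
private lemma gragg_inv (c : ℕ → ℂ)
    (hodd : ∀ k : ℕ, 1 ≤ k → c (2 * k) = 0) :
    ∀ n : ℕ, (gst c n).tp = 0 ∧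
      (∀ r : ℤ, Odd r → (gst c n).Bp r = 0) ∧
      (∀ r : ℤ, Odd r → (gst c n).Bc r = 0) := by
  intro n
  induction n with
  | zero =>
      refine ⟨rfl, fun r hr => rfl, fun r hr => ?_⟩
      simp only [gst]
      rw [if_neg]
      rintro rfl
      exact (Int.not_odd_iff_even.mpr Even.zero) hr
  | succ n ih =>
      obtain ⟨htp, hBp, hBc⟩ := ih
      have hnum : (∑ r ∈ Finset.range (n + 1), c (2 * n + 2 - r) * (gst c n).Bc r) = 0 := by
        apply Finset.sum_eq_zero
        intro r hr
        rcases Nat.even_or_odd r with he | ho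
        · have hle : r ≤ n := Nat.lt_succ_iff.mp (Finset.mem_range.mp hr)
          obtain ⟨k, hk⟩ := he
          have : 2 * n + 2 - r = 2 * (n + 1 - k) := by omega
          rw [this, hodd (n + 1 - k) (by omega), zero_mul]
        · rw [hBc r (by exact_mod_cast ho), mul_zero]
      have htc : (gst c (n + 1)).tp = 0 := by
        show ((∑ r ∈ Finset.range (n + 1), c (2 * n + 2 - r) * (gst c n).Bc r) /
          (∑ r ∈ Finset.range (n + 1), c (2 * n + 1 - r) * (gst c n).Bc r)) = 0
        rw [hnum, zero_div]
      refine ⟨htc, fun r hr => hBc r hr, fun r hr => ?_⟩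
      show (if r = 0 then 1 else if r < 0 then (0:ℂ) else
        (gst c n).Bc r + ((gst c n).tp - _) * (gst c n).Bc (r - 1)
          - _ * (gst c n).Bp (r - 2)) = 0
      have hr0 : r ≠ 0 := by rintro rfl; exact (Int.not_odd_iff_even.mpr Even.zero) hr
      rw [if_neg hr0]
      by_cases hneg : r < 0
      · rw [if_pos hneg]
      · rw [if_neg hneg]
        have h1 : (gst c n).Bc r = 0 := hBc r hr
        have h2 : (gst c n).Bp (r - 2) = 0 := hBp _ (by
          obtain ⟨k, hk⟩ := hr; exact ⟨k - 1, by omega⟩)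
        have htc' : (∑ r ∈ Finset.range (n + 1), c (2 * n + 2 - r) * (gst c n).Bc r) /
            (∑ r ∈ Finset.range (n + 1), c (2 * n + 1 - r) * (gst c n).Bc r) = 0 := by
          rw [hnum, zero_div]
        rw [h1, h2, htp, htc', sub_zero, zero_mul, mul_zero, zero_add, sub_zero]

/-- If `P(z) = Σ_{r≥1} c_r z^r` is an odd formal power series (`c_{2k} = 0` for
all `k ≥ 1`) and Gragg's algorithm applied to `P` is well defined (all Hankel
determinants nonzero), then all coefficients `q_n` produced by the algorithm
vanish: `q_n = 0` for every `n ≥ 1`. -/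
theorem gragg_odd_series_q_eq_zero (c : ℕ → ℂ)
    (hodd : ∀ k : ℕ, 1 ≤ k → c (2 * k) = 0)
    (hH : ∀ n : ℕ, 0 < n → hankel c n ≠ 0) :
    ∀ n : ℕ, 1 ≤ n → graggQ c n = 0 := by
  intro n hn
  unfold graggQ
  rw [(gragg_inv c hodd (n - 1)).1, (gragg_inv c hodd n).1, sub_zero]
end
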